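/- Let L : ℝ^d → ℝ be differentiable, L∞-smooth with respect to the ℓ∞ norm, bounded below with infimum L*, and μ∞-strongly convex in the ℓ1-gradient-dominance sense: 2·μ∞·(L(x) − L*) ≤ ‖∇L(x)‖₁² for all x, with μ∞ > 0. Let θ ∈ (0,1). On a probability space, let (x_k) be random vectors with x_0 deterministic and x_{k+1} = x_k − η_k·sign(g_k) with η_k = (1 − θ)·‖∇L(x_k)‖₁ / L∞, where each g_k is integrable, conditionally unbiased E[g_k ∣ x_0, …, x_k] = ∇L(x_k), and satisfies E[‖g_k − ∇L(x_k)‖₁ ∣ x_0, …, x_k] ≤ θ·‖∇L(x_k)‖₁ almost surely. Then for every k, E[L(x_{k+1})] − L* ≤ (1 − (1 − θ)²·μ∞/L∞) · (E[L(x_k)] − L*). -/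

import Mathlib

open MeasureTheory

/-- The ℓ1 norm on `ℝ^d`. -/
def l1norm {d : ℕ} (v : EuclideanSpace ℝ (Fin d)) : ℝ := ∑ i, |v i|

/-- The ℓ∞ norm on `ℝ^d`. -/
noncomputable def linfnorm {d : ℕ} (v : EuclideanSpace ℝ (Fin d)) : ℝ := ⨆ i, |v i|

/-- The coordinatewise sign map on `ℝ^d`. -/
noncomputable def signVec {d : ℕ} (v : EuclideanSpace ℝ (Fin d)) : EuclideanSpace ℝ (Fin d) :=
  WithLp.toLp 2 (fun i => Real.sign (v i))

/-- The σ-algebra generated by the random vectors `x 0, …, x k`. -/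
def genBy {Ω : Type*} {d : ℕ} (x : ℕ → Ω → EuclideanSpace ℝ (Fin d)) (k : ℕ) :
    MeasurableSpace Ω :=
  ⨆ i ∈ Finset.range (k + 1), MeasurableSpace.comap (x i) inferInstance

section aux

variable {d : ℕ}

lemma l1norm_nonneg (v : EuclideanSpace ℝ (Fin d)) : 0 ≤ l1norm v :=
  Finset.sum_nonneg fun _ _ => abs_nonneg _

lemma linfnorm_nonneg (v : EuclideanSpace ℝ (Fin d)) : 0 ≤ linfnorm v :=
  Real.iSup_nonneg fun _ => abs_nonneg _

lemma abs_le_linfnorm (v : EuclideanSpace ℝ (Fin d)) (i : Fin d) : |v i| ≤ linfnorm v :=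
  le_ciSup (f := fun j => |v j|) (Set.Finite.bddAbove (Set.finite_range _)) i

lemma linfnorm_le_l1norm (v : EuclideanSpace ℝ (Fin d)) : linfnorm v ≤ l1norm v :=
  Real.iSup_le (fun i => Finset.single_le_sum (f := fun j => |v j|)
    (fun _ _ => abs_nonneg _) (Finset.mem_univ i)) (l1norm_nonneg v)

lemma linfnorm_smul_le (c : ℝ) (v : EuclideanSpace ℝ (Fin d)) :
    linfnorm (c • v) ≤ |c| * linfnorm v := by
  refine Real.iSup_le (fun i => ?_) (mul_nonneg (abs_nonneg _) (linfnorm_nonneg _))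
  have : (c • v) i = c * v i := rfl
  rw [this, abs_mul]
  exact mul_le_mul_of_nonneg_left (abs_le_linfnorm v i) (abs_nonneg c)

lemma abs_sign_le_one (t : ℝ) : |Real.sign t| ≤ 1 := by
  rcases lt_trichotomy t 0 with h|h|h
  · simp [Real.sign_of_neg h]
  · simp [h, Real.sign_zero]
  · simp [Real.sign_of_pos h]

lemma linfnorm_signVec_le (v : EuclideanSpace ℝ (Fin d)) : linfnorm (signVec v) ≤ 1 :=
  Real.iSup_le (fun i => abs_sign_le_one (v i)) one_pos.le

lemma l1norm_signVec_le (v : EuclideanSpace ℝ (Fin d)) : l1norm (signVec v) ≤ d := by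
  have : ∀ i : Fin d, |signVec v i| ≤ 1 := fun i => abs_sign_le_one (v i)
  calc l1norm (signVec v) ≤ ∑ _i : Fin d, (1:ℝ) := Finset.sum_le_sum fun i _ => this i
    _ = d := by simp

lemma l1norm_smul (c : ℝ) (v : EuclideanSpace ℝ (Fin d)) : l1norm (c • v) = |c| * l1norm v := by
  simp only [l1norm, Finset.mul_sum]
  refine Finset.sum_congr rfl fun i _ => ?_
  have : (c • v) i = c * v i := rfl
  rw [this, abs_mul]

lemma l1norm_add_le (u v : EuclideanSpace ℝ (Fin d)) : l1norm (u + v) ≤ l1norm u + l1norm v := by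
  simp only [l1norm, ← Finset.sum_add_distrib]
  exact Finset.sum_le_sum fun i _ => abs_add_le _ _

lemma l1norm_triangle (u w : EuclideanSpace ℝ (Fin d)) :
    l1norm u ≤ l1norm (u - w) + l1norm w := by
  have : u = (u - w) + w := by abel
  calc l1norm u = l1norm ((u - w) + w) := by rw [← this]
    _ ≤ l1norm (u - w) + l1norm w := l1norm_add_le _ _

lemma inner_le_l1_linf (u v : EuclideanSpace ℝ (Fin d)) :
    |∑ i, u i * v i| ≤ l1norm u * linfnorm v := by
  calc |∑ i, u i * v i| ≤ ∑ i, |u i * v i| := Finset.abs_sum_le_sum_abs _ _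
    _ ≤ ∑ i, |u i| * linfnorm v := by
        refine Finset.sum_le_sum fun i _ => ?_
        rw [abs_mul]
        exact mul_le_mul_of_nonneg_left (abs_le_linfnorm v i) (abs_nonneg _)
    _ = l1norm u * linfnorm v := by rw [l1norm, Finset.sum_mul]

lemma norm_le_l1norm (v : EuclideanSpace ℝ (Fin d)) : ‖v‖ ≤ l1norm v := by
  rw [EuclideanSpace.norm_eq]
  have h1 : ∑ i, ‖v i‖ ^ 2 ≤ (l1norm v) ^ 2 := by
    rw [l1norm]
    simpa [Real.norm_eq_abs] using
      Finset.sum_sq_le_sq_sum_of_nonneg (s := Finset.univ) (f := fun i => |v i|)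
        (fun i _ => abs_nonneg (v i))
  calc Real.sqrt (∑ i, ‖v i‖ ^ 2) ≤ Real.sqrt ((l1norm v)^2) := Real.sqrt_le_sqrt h1
    _ = l1norm v := Real.sqrt_sq (l1norm_nonneg v)

lemma linfnorm_le_norm (v : EuclideanSpace ℝ (Fin d)) : linfnorm v ≤ ‖v‖ := by
  refine Real.iSup_le (fun i => ?_) (norm_nonneg _)
  rw [EuclideanSpace.norm_eq]
  have h1 : |v i| = Real.sqrt (‖v i‖ ^ 2) := by
    rw [Real.sqrt_sq (norm_nonneg _), Real.norm_eq_abs]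
  rw [h1]
  exact Real.sqrt_le_sqrt (Finset.single_le_sum (f := fun j => ‖v j‖^2)
    (fun _ _ => sq_nonneg _) (Finset.mem_univ i))

lemma sign_inner_bound (u w : EuclideanSpace ℝ (Fin d)) :
    l1norm w - l1norm (w - u) ≤ ∑ i, u i * signVec w i := by
  have h : ∀ i, |w i| - |w i - u i| ≤ u i * Real.sign (w i) := by
    intro i
    rcases lt_trichotomy (w i) 0 with h|h|h
    · rw [Real.sign_of_neg h, abs_of_neg h]
      have := neg_abs_le (w i - u i)
      linarith
    · rw [h, Real.sign_zero]
      simp only [abs_zero, zero_sub, abs_neg, mul_zero]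
      have := abs_nonneg (u i); linarith
    · rw [Real.sign_of_pos h, abs_of_pos h]
      have := le_abs_self (w i - u i)
      linarith
  calc l1norm w - l1norm (w - u) = ∑ i, (|w i| - |w i - u i|) := by
        rw [Finset.sum_sub_distrib]; rfl
    _ ≤ ∑ i, u i * Real.sign (w i) := Finset.sum_le_sum fun i _ => h i
    _ = ∑ i, u i * signVec w i := rfl

lemma hasDerivAt_line (L : EuclideanSpace ℝ (Fin d) → ℝ) (hL : Differentiable ℝ L)
    (p v : EuclideanSpace ℝ (Fin d)) (t : ℝ) :
    HasDerivAt (fun s : ℝ => L (p + s • v)) (∑ i, gradient L (p + t • v) i * v i) t := by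
  have hc : HasDerivAt (fun s : ℝ => p + s • v) v t := by
    simpa using ((hasDerivAt_id t).smul_const v).const_add p
  have hF := ((hL (p + t • v)).hasGradientAt.hasFDerivAt).comp_hasDerivAt t hc
  have : (InnerProductSpace.toDual ℝ _ (gradient L (p + t • v))) v
      = ∑ i, gradient L (p + t • v) i * v i := by
    simp only [InnerProductSpace.toDual_apply_apply, PiLp.inner_apply, RCLike.inner_apply, conj_trivial]
    exact Finset.sum_congr rfl fun i _ => mul_comm _ _
  rw [this] at hF
  exact hF

lemma descent (L : EuclideanSpace ℝ (Fin d) → ℝ) (hL : Differentiable ℝ L)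
    (Linf : ℝ) (hLinf_nonneg : 0 ≤ Linf)
    (hsmooth : ∀ x y, l1norm (gradient L x - gradient L y) ≤ Linf * linfnorm (x - y))
    (p v : EuclideanSpace ℝ (Fin d)) :
    L (p + v) ≤ L p + (∑ i, gradient L p i * v i) + Linf / 2 * (linfnorm v) ^ 2 := by
  set S : ℝ := ∑ i, gradient L p i * v i with hS
  set C : ℝ := Linf * (linfnorm v) ^ 2 with hC
  set ψ : ℝ → ℝ := fun t => L (p + t • v) - L p - t * S - C / 2 * t ^ 2 with hψ
  have hψderiv : ∀ t : ℝ, HasDerivAt ψ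
      ((∑ i, gradient L (p + t • v) i * v i) - S - C * t) t := by
    intro t
    have h1 := hasDerivAt_line L hL p v t
    have h2 : HasDerivAt (fun t : ℝ => L p + t * S + C / 2 * t ^ 2) (S + C * t) t := by
      have ha : HasDerivAt (fun t : ℝ => t * S) S t := by
        simpa using (hasDerivAt_id t).mul_const S
      have hb : HasDerivAt (fun t : ℝ => C / 2 * t ^ 2) (C / 2 * (2 * t)) t := by
        have := (hasDerivAt_pow 2 t).const_mul (C / 2)
        exact this.congr_deriv (by norm_num)
      have := (ha.const_add (L p)).add hb
      exact this.congr_deriv (by ring)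
    have h3 := h1.sub h2
    have hfun : ψ = fun s : ℝ => L (p + s • v) - (L p + s * S + C / 2 * s ^ 2) := by
      funext s; simp only [hψ]; ring
    rw [hfun]
    exact h3.congr_deriv (by ring)
  have hderiv_nonpos : ∀ t ∈ Set.Ioo (0:ℝ) 1,
      (∑ i, gradient L (p + t • v) i * v i) - S - C * t ≤ 0 := by
    intro t ht
    have h0 : (∑ i, gradient L (p + t • v) i * v i) - S
        = ∑ i, (gradient L (p + t • v) - gradient L p) i * v i := by
      rw [hS, ← Finset.sum_sub_distrib]
      refine Finset.sum_congr rfl fun i _ => ?_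
      have : (gradient L (p + t • v) - gradient L p) i
          = gradient L (p + t • v) i - gradient L p i := rfl
      rw [this]; ring
    have h1 : (∑ i, gradient L (p + t • v) i * v i) - S ≤ C * t := by
      rw [h0]
      calc ∑ i, (gradient L (p + t • v) - gradient L p) i * v i
          ≤ |∑ i, (gradient L (p + t • v) - gradient L p) i * v i| := le_abs_self _
        _ ≤ l1norm (gradient L (p + t • v) - gradient L p) * linfnorm v :=
            inner_le_l1_linf _ _
        _ ≤ (Linf * linfnorm ((p + t • v) - p)) * linfnorm v := by
            exact mul_le_mul_of_nonneg_right (hsmooth _ _) (linfnorm_nonneg v)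
        _ ≤ (Linf * (t * linfnorm v)) * linfnorm v := by
            have he : (p + t • v) - p = t • v := by abel
            rw [he]
            have h2 := linfnorm_smul_le t v
            rw [abs_of_pos ht.1] at h2
            exact mul_le_mul_of_nonneg_right
              (mul_le_mul_of_nonneg_left h2 hLinf_nonneg) (linfnorm_nonneg v)
        _ = C * t := by rw [hC]; ring
    linarith
  have hanti : AntitoneOn ψ (Set.Icc (0:ℝ) 1) := by
    refine antitoneOn_of_deriv_nonpos (convex_Icc 0 1) ?_ ?_ ?_
    · exact Continuous.continuousOn (by
        exact continuous_iff_continuousAt.2 fun t => ((hψderiv t).continuousAt))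
    · intro t _
      exact ((hψderiv t).differentiableAt).differentiableWithinAt
    · intro t ht
      rw [interior_Icc] at ht
      rw [(hψderiv t).deriv]
      exact hderiv_nonpos t ht
  have h01 : ψ 1 ≤ ψ 0 := hanti (Set.left_mem_Icc.2 one_pos.le)
    (Set.right_mem_Icc.2 one_pos.le) one_pos.le
  simp only [hψ] at h01
  simp only [one_smul, zero_smul, add_zero, zero_mul, zero_pow, mul_zero, one_mul, one_pow] at h01
  rw [hC] at h01
  linarith

/-- The pointwise descent step inequality. -/
lemma step_ineq (L : EuclideanSpace ℝ (Fin d) → ℝ) (hL : Differentiable ℝ L)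
    (Linf : ℝ) (hLinf_pos : 0 < Linf)
    (hsmooth : ∀ x y, l1norm (gradient L x - gradient L y) ≤ Linf * linfnorm (x - y))
    (θ : ℝ) (hθ1 : θ < 1) (p gv : EuclideanSpace ℝ (Fin d)) :
    L (p - ((1 - θ) * l1norm (gradient L p) / Linf) • signVec gv)
      ≤ L p - ((1 - θ) * l1norm (gradient L p) / Linf) * l1norm gv
        + ((1 - θ) * l1norm (gradient L p) / Linf) * l1norm (gv - gradient L p)
        + (1 - θ) ^ 2 * (l1norm (gradient L p)) ^ 2 / (2 * Linf) := by
  set n : ℝ := l1norm (gradient L p) with hn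
  set η : ℝ := (1 - θ) * n / Linf with hη
  have hη_nonneg : 0 ≤ η := by
    apply div_nonneg (mul_nonneg (by linarith) (l1norm_nonneg _)) hLinf_pos.le
  have hrw : p - η • signVec gv = p + (-η) • signVec gv := by
    rw [neg_smul]; abel
  rw [hrw]
  have hd := descent L hL Linf hLinf_pos.le hsmooth p ((-η) • signVec gv)
  have hsum : (∑ i, gradient L p i * ((-η) • signVec gv) i)
      = (-η) * ∑ i, gradient L p i * signVec gv i := by
    rw [Finset.mul_sum]
    refine Finset.sum_congr rfl fun i _ => ?_
    have : ((-η) • signVec gv) i = (-η) * signVec gv i := rfl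
    rw [this]; ring
  have hinner : (-η) * ∑ i, gradient L p i * signVec gv i
      ≤ (-η) * (l1norm gv - l1norm (gv - gradient L p)) := by
    apply mul_le_mul_of_nonpos_left (sign_inner_bound _ _) (by linarith)
  have hlinf : (linfnorm ((-η) • signVec gv)) ^ 2 ≤ η ^ 2 := by
    have h1 : linfnorm ((-η) • signVec gv) ≤ η := by
      calc linfnorm ((-η) • signVec gv) ≤ |(-η)| * linfnorm (signVec gv) :=
            linfnorm_smul_le _ _
        _ ≤ |(-η)| * 1 := by
            exact mul_le_mul_of_nonneg_left (linfnorm_signVec_le gv) (abs_nonneg _)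
        _ = η := by rw [mul_one, abs_neg, abs_of_nonneg hη_nonneg]
    exact pow_le_pow_left₀ (linfnorm_nonneg _) h1 2
  have hquad : Linf / 2 * (linfnorm ((-η) • signVec gv)) ^ 2
      ≤ (1 - θ) ^ 2 * n ^ 2 / (2 * Linf) := by
    have h2 : Linf / 2 * (linfnorm ((-η) • signVec gv)) ^ 2 ≤ Linf / 2 * η ^ 2 :=
      mul_le_mul_of_nonneg_left hlinf (by linarith)
    have h3 : Linf / 2 * η ^ 2 = (1 - θ) ^ 2 * n ^ 2 / (2 * Linf) := by
      rw [hη]; field_simp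
    linarith
  calc L (p + (-η) • signVec gv)
      ≤ L p + (∑ i, gradient L p i * ((-η) • signVec gv) i)
        + Linf / 2 * (linfnorm ((-η) • signVec gv)) ^ 2 := hd
    _ ≤ L p + (-η) * (l1norm gv - l1norm (gv - gradient L p))
        + (1 - θ) ^ 2 * n ^ 2 / (2 * Linf) := by
        rw [hsum]; linarith
    _ = L p - η * l1norm gv + η * l1norm (gv - gradient L p)
        + (1 - θ) ^ 2 * n ^ 2 / (2 * Linf) := by ring

end aux
/-- SignSGD with adaptive batch sizes under ℓ1 gradient dominance (strong convexity), with
`η_k = (1 − θ)·‖∇L(x_k)‖₁ / Linf`: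
`E[L(x_{k+1})] − L* ≤ (1 − (1 − θ)²·μstrong/Linf) · (E[L(x_k)] − L*)` for every `k`. -/
theorem stmt9 {d : ℕ} (L : EuclideanSpace ℝ (Fin d) → ℝ) (hL : Differentiable ℝ L)
    (Linf : ℝ) (hLinf_pos : 0 < Linf)
    (hsmooth : ∀ x y, l1norm (gradient L x - gradient L y) ≤ Linf * linfnorm (x - y))
    (Lstar : ℝ) (hinf : IsGLB (Set.range L) Lstar)
    (μstrong : ℝ) (hμstrong_pos : 0 < μstrong)
    (hsc : ∀ x, 2 * μstrong * (L x - Lstar) ≤ (l1norm (gradient L x)) ^ 2)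
    (θ : ℝ) (hθ : θ ∈ Set.Ioo (0 : ℝ) 1)
    {Ω : Type*} [MeasurableSpace Ω] (μ : Measure Ω) [IsProbabilityMeasure μ]
    (x : ℕ → Ω → EuclideanSpace ℝ (Fin d)) (g : ℕ → Ω → EuclideanSpace ℝ (Fin d))
    (x₀ : EuclideanSpace ℝ (Fin d)) (hx0 : ∀ ω, x 0 ω = x₀)
    (hxmeas : ∀ k, Measurable (x k))
    (hg_int : ∀ k, Integrable (g k) μ)
    (hupdate : ∀ k ω, x (k + 1) ω
      = x k ω - ((1 - θ) * l1norm (gradient L (x k ω)) / Linf) • signVec (g k ω))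
    (hunbiased : ∀ k, μ[g k | genBy x k] =ᵐ[μ] fun ω => gradient L (x k ω))
    (hnoise : ∀ k, ∀ᵐ ω ∂μ,
      (μ[fun ω' => l1norm (g k ω' - gradient L (x k ω')) | genBy x k]) ω
        ≤ θ * l1norm (gradient L (x k ω))) :
    ∀ k, (∫ ω, L (x (k + 1) ω) ∂μ) - Lstar
      ≤ (1 - (1 - θ) ^ 2 * μstrong / Linf) * ((∫ ω, L (x k ω) ∂μ) - Lstar) := by
  obtain ⟨hθ0, hθ1⟩ := hθ
  -- continuity facts
  have hgradcont : Continuous (fun p => gradient L p) := by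
    have hlip : LipschitzWith (Real.toNNReal Linf) (fun p => gradient L p) := by
      apply LipschitzWith.of_dist_le_mul
      intro p q
      rw [dist_eq_norm, dist_eq_norm]
      calc ‖gradient L p - gradient L q‖ ≤ l1norm (gradient L p - gradient L q) :=
            norm_le_l1norm _
        _ ≤ Linf * linfnorm (p - q) := hsmooth p q
        _ ≤ Linf * ‖p - q‖ := mul_le_mul_of_nonneg_left (linfnorm_le_norm _) hLinf_pos.le
        _ = (Real.toNNReal Linf : ℝ) * ‖p - q‖ := by
            rw [Real.coe_toNNReal _ hLinf_pos.le]
    exact hlip.continuous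
  have hl1cont : Continuous (fun v : EuclideanSpace ℝ (Fin d) => l1norm v) := by
    have : (fun v : EuclideanSpace ℝ (Fin d) => l1norm v)
        = fun v => ∑ i, |v i| := rfl
    rw [this]
    refine continuous_finset_sum _ fun i _ => ?_
    exact ((EuclideanSpace.proj (𝕜 := ℝ) i).continuous).abs
  set G₀ : ℝ := l1norm (gradient L x₀) with hG₀_def
  have hG₀_nonneg : 0 ≤ G₀ := l1norm_nonneg _
  -- gradient bound in terms of distance from x₀
  have hgradbd : ∀ q : EuclideanSpace ℝ (Fin d),
      l1norm (gradient L q) ≤ G₀ + Linf * l1norm (q - x₀) := by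
    intro q
    calc l1norm (gradient L q)
        ≤ l1norm (gradient L q - gradient L x₀) + l1norm (gradient L x₀) :=
          l1norm_triangle _ _
      _ ≤ Linf * linfnorm (q - x₀) + G₀ := by
          have := hsmooth q x₀; rw [hG₀_def]; linarith
      _ ≤ G₀ + Linf * l1norm (q - x₀) := by
          have := mul_le_mul_of_nonneg_left (linfnorm_le_l1norm (q - x₀)) hLinf_pos.le
          linarith
  -- abs bound on L in terms of distance from x₀
  have hLlow : ∀ q, Lstar ≤ L q := fun q => hinf.1 ⟨q, rfl⟩
  have hLabs : ∀ q : EuclideanSpace ℝ (Fin d),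
      |L q| ≤ |L x₀| + |Lstar| + G₀ * l1norm (q - x₀)
        + Linf / 2 * (l1norm (q - x₀)) ^ 2 := by
    intro q
    have hup : L q ≤ L x₀ + G₀ * l1norm (q - x₀) + Linf / 2 * (l1norm (q - x₀)) ^ 2 := by
      have hd := descent L hL Linf hLinf_pos.le hsmooth x₀ (q - x₀)
      have he : x₀ + (q - x₀) = q := by abel
      rw [he] at hd
      have h1 : (∑ i, gradient L x₀ i * (q - x₀) i) ≤ G₀ * l1norm (q - x₀) := by
        calc (∑ i, gradient L x₀ i * (q - x₀) i)
            ≤ |∑ i, gradient L x₀ i * (q - x₀) i| := le_abs_self _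
          _ ≤ l1norm (gradient L x₀) * linfnorm (q - x₀) := inner_le_l1_linf _ _
          _ ≤ G₀ * l1norm (q - x₀) := by
              rw [hG₀_def]
              exact mul_le_mul_of_nonneg_left (linfnorm_le_l1norm _) (l1norm_nonneg _)
      have h2 : Linf / 2 * (linfnorm (q - x₀)) ^ 2 ≤ Linf / 2 * (l1norm (q - x₀)) ^ 2 := by
        refine mul_le_mul_of_nonneg_left ?_ (by linarith)
        exact pow_le_pow_left₀ (linfnorm_nonneg _) (linfnorm_le_l1norm _) 2
      linarith
    have hnn1 : 0 ≤ G₀ * l1norm (q - x₀) := mul_nonneg hG₀_nonneg (l1norm_nonneg _)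
    have hnn2 : 0 ≤ Linf / 2 * (l1norm (q - x₀)) ^ 2 :=
      mul_nonneg (by linarith) (sq_nonneg _)
    have hlow := hLlow q
    have h3 : -|Lstar| ≤ Lstar := neg_abs_le _
    have h4 : L x₀ ≤ |L x₀| := le_abs_self _
    have h5 := abs_nonneg (L x₀)
    have h6 := abs_nonneg Lstar
    exact abs_le.2 ⟨by linarith, by linarith⟩
  -- bounded iterates
  have hbR : ∀ j, ∃ R : ℝ, 0 ≤ R ∧ ∀ ω, l1norm (x j ω - x₀) ≤ R := by
    intro j
    induction j with
    | zero =>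
      refine ⟨0, le_rfl, fun ω => ?_⟩
      rw [hx0 ω, sub_self]
      simp [l1norm]
    | succ j ih =>
      obtain ⟨R, hR0, hR⟩ := ih
      refine ⟨R + (1 - θ) * (G₀ + Linf * R) / Linf * d, ?_, fun ω => ?_⟩
      · have h1 : (0:ℝ) ≤ (1 - θ) * (G₀ + Linf * R) / Linf * d := by
          apply mul_nonneg
          apply div_nonneg
          apply mul_nonneg (by linarith)
          · exact add_nonneg hG₀_nonneg (mul_nonneg hLinf_pos.le hR0)
          · exact hLinf_pos.le
          · exact Nat.cast_nonneg d
        linarith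
      · rw [hupdate j ω]
        have hre : x j ω - ((1 - θ) * l1norm (gradient L (x j ω)) / Linf) • signVec (g j ω) - x₀
            = (x j ω - x₀) + (-((1 - θ) * l1norm (gradient L (x j ω)) / Linf)) • signVec (g j ω) := by
          rw [neg_smul]; abel
        rw [hre]
        have hgb : l1norm (gradient L (x j ω)) ≤ G₀ + Linf * R := by
          have h1 := hgradbd (x j ω)
          have h2 := mul_le_mul_of_nonneg_left (hR ω) hLinf_pos.le
          linarith
        have hηb : (1 - θ) * l1norm (gradient L (x j ω)) / Linf
            ≤ (1 - θ) * (G₀ + Linf * R) / Linf := by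
          apply (div_le_div_iff_of_pos_right hLinf_pos).2
          exact mul_le_mul_of_nonneg_left hgb (by linarith)
        have hη0' : 0 ≤ (1 - θ) * l1norm (gradient L (x j ω)) / Linf :=
          div_nonneg (mul_nonneg (by linarith) (l1norm_nonneg _)) hLinf_pos.le
        calc l1norm ((x j ω - x₀) + (-((1 - θ) * l1norm (gradient L (x j ω)) / Linf)) • signVec (g j ω))
            ≤ l1norm (x j ω - x₀)
              + l1norm ((-((1 - θ) * l1norm (gradient L (x j ω)) / Linf)) • signVec (g j ω)) :=
              l1norm_add_le _ _
          _ ≤ R + ((1 - θ) * l1norm (gradient L (x j ω)) / Linf) * d := by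
              rw [l1norm_smul, abs_neg, abs_of_nonneg hη0']
              have := mul_le_mul_of_nonneg_left (l1norm_signVec_le (g j ω)) hη0'
              have := hR ω
              linarith
          _ ≤ R + (1 - θ) * (G₀ + Linf * R) / Linf * d := by
              have := mul_le_mul_of_nonneg_right hηb (Nat.cast_nonneg (α := ℝ) d)
              linarith
  intro k
  have hm : genBy x k ≤ (inferInstance : MeasurableSpace Ω) :=
    iSup₂_le fun i _ => (hxmeas i).comap_le
  haveI hsf : SigmaFinite (μ.trim hm) := by infer_instance
  have hxkm : Measurable[genBy x k] (x k) := by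
    have h1 : MeasurableSpace.comap (x k) inferInstance ≤ genBy x k :=
      le_iSup₂ (f := fun i (_ : i ∈ Finset.range (k + 1)) =>
        MeasurableSpace.comap (x i) inferInstance) k (Finset.self_mem_range_succ k)
    exact Measurable.mono (Measurable.of_comap_le le_rfl) h1 le_rfl
  obtain ⟨R, hR0, hR⟩ := hbR k
  obtain ⟨R', hR'0, hR'⟩ := hbR (k + 1)
  set Cg : ℝ := G₀ + Linf * R with hCg_def
  have hCg0 : 0 ≤ Cg := add_nonneg hG₀_nonneg (mul_nonneg hLinf_pos.le hR0)
  have hnbd : ∀ ω, l1norm (gradient L (x k ω)) ≤ Cg := by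
    intro ω
    have h1 := hgradbd (x k ω)
    have h2 := mul_le_mul_of_nonneg_left (hR ω) hLinf_pos.le
    rw [hCg_def]; linarith
  have hn0 : ∀ ω, (0:ℝ) ≤ l1norm (gradient L (x k ω)) := fun ω => l1norm_nonneg _
  set ηm : ℝ := (1 - θ) * Cg / Linf with hηm_def
  have hη0 : ∀ ω, (0:ℝ) ≤ (1 - θ) * l1norm (gradient L (x k ω)) / Linf := fun ω =>
    div_nonneg (mul_nonneg (by linarith) (hn0 ω)) hLinf_pos.le
  have hηbd : ∀ ω, (1 - θ) * l1norm (gradient L (x k ω)) / Linf ≤ ηm := by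
    intro ω
    rw [hηm_def]
    exact (div_le_div_iff_of_pos_right hLinf_pos).2 (mul_le_mul_of_nonneg_left (hnbd ω) (by linarith))
  -- measurability
  have hGmeas : Measurable fun ω => gradient L (x k ω) := hgradcont.measurable.comp (hxmeas k)
  have hGm : Measurable[genBy x k] fun ω => gradient L (x k ω) :=
    hgradcont.measurable.comp hxkm
  have hnmeas : Measurable fun ω => l1norm (gradient L (x k ω)) :=
    hl1cont.measurable.comp hGmeas
  have hnm : Measurable[genBy x k] fun ω => l1norm (gradient L (x k ω)) :=
    hl1cont.measurable.comp hGm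
  have hηmeas : Measurable fun ω => (1 - θ) * l1norm (gradient L (x k ω)) / Linf :=
    (hnmeas.const_mul (1 - θ)).div_const Linf
  have hηm' : Measurable[genBy x k] fun ω => (1 - θ) * l1norm (gradient L (x k ω)) / Linf :=
    (hnm.const_mul (1 - θ)).div_const Linf
  have hη_aesm : AEStronglyMeasurable
      (fun ω => (1 - θ) * l1norm (gradient L (x k ω)) / Linf) μ :=
    hηmeas.aestronglyMeasurable
  have hη_norm_bd : ∀ᵐ ω ∂μ, ‖(1 - θ) * l1norm (gradient L (x k ω)) / Linf‖ ≤ ηm :=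
    ae_of_all _ fun ω => by
      rw [Real.norm_eq_abs, abs_of_nonneg (hη0 ω)]; exact hηbd ω
  -- integrability
  have hLint : ∀ (j : ℕ) (Rj : ℝ), 0 ≤ Rj → (∀ ω, l1norm (x j ω - x₀) ≤ Rj) →
      Integrable (fun ω => L (x j ω)) μ := by
    intro j Rj hRj0 hRj
    refine Integrable.mono'
      (integrable_const (|L x₀| + |Lstar| + G₀ * Rj + Linf / 2 * Rj ^ 2))
      (hL.continuous.measurable.comp (hxmeas j)).aestronglyMeasurable
      (ae_of_all _ fun ω => ?_)
    rw [Real.norm_eq_abs]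
    refine (hLabs (x j ω)).trans ?_
    have h1 := hRj ω
    have h2 : G₀ * l1norm (x j ω - x₀) ≤ G₀ * Rj :=
      mul_le_mul_of_nonneg_left h1 hG₀_nonneg
    have h3 : Linf / 2 * (l1norm (x j ω - x₀)) ^ 2 ≤ Linf / 2 * Rj ^ 2 :=
      mul_le_mul_of_nonneg_left (pow_le_pow_left₀ (l1norm_nonneg _) h1 2) (by linarith)
    linarith
  have hLk_int : Integrable (fun ω => L (x k ω)) μ := hLint k R hR0 hR
  have hLk1_int : Integrable (fun ω => L (x (k + 1) ω)) μ := hLint (k + 1) R' hR'0 hR'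
  have hproj_int : ∀ i : Fin d, Integrable (fun ω => g k ω i) μ := fun i =>
    (EuclideanSpace.proj (𝕜 := ℝ) i).integrable_comp (hg_int k)
  have hGi_meas : ∀ i : Fin d, Measurable fun ω => gradient L (x k ω) i := fun i =>
    ((EuclideanSpace.proj (𝕜 := ℝ) i).continuous.measurable).comp hGmeas
  have hGi_meas' : ∀ i : Fin d, Measurable[genBy x k] fun ω => gradient L (x k ω) i := fun i =>
    ((EuclideanSpace.proj (𝕜 := ℝ) i).continuous.measurable).comp hGm
  have hGvec_int : Integrable (fun ω => gradient L (x k ω)) μ := by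
    refine Integrable.mono' (integrable_const Cg) hGmeas.aestronglyMeasurable
      (ae_of_all _ fun ω => ?_)
    exact (norm_le_l1norm _).trans (hnbd ω)
  have hGi_int : ∀ i : Fin d, Integrable (fun ω => gradient L (x k ω) i) μ := by
    intro i
    refine Integrable.mono' (integrable_const Cg) (hGi_meas i).aestronglyMeasurable
      (ae_of_all _ fun ω => ?_)
    rw [Real.norm_eq_abs]
    refine le_trans ?_ (hnbd ω)
    exact Finset.single_le_sum (f := fun j => |gradient L (x k ω) j|)
      (fun _ _ => abs_nonneg _) (Finset.mem_univ i)
  have hf1_int : Integrable (fun ω => l1norm (g k ω)) μ := by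
    have he : (fun ω => l1norm (g k ω)) = fun ω => ∑ i, |g k ω i| := rfl
    rw [he]
    exact integrable_finset_sum _ fun i _ => (hproj_int i).abs
  have hf2_int : Integrable (fun ω' => l1norm (g k ω' - gradient L (x k ω'))) μ := by
    have he : (fun ω' => l1norm (g k ω' - gradient L (x k ω')))
        = fun ω' => ∑ i, |g k ω' i - gradient L (x k ω') i| := rfl
    rw [he]
    exact integrable_finset_sum _ fun i _ => ((hproj_int i).sub (hGi_int i)).abs
  have hn_int : Integrable (fun ω => l1norm (gradient L (x k ω))) μ :=
    Integrable.mono' (integrable_const Cg) hnmeas.aestronglyMeasurable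
      (ae_of_all _ fun ω => by rw [Real.norm_eq_abs, abs_of_nonneg (hn0 ω)]; exact hnbd ω)
  have hnsq_int : Integrable (fun ω => (l1norm (gradient L (x k ω))) ^ 2) μ := by
    refine Integrable.mono' (integrable_const (Cg ^ 2))
      (hnmeas.pow_const 2).aestronglyMeasurable (ae_of_all _ fun ω => ?_)
    rw [Real.norm_eq_abs, abs_of_nonneg (sq_nonneg _)]
    exact pow_le_pow_left₀ (hn0 ω) (hnbd ω) 2
  have hηf1_int : Integrable
      (fun ω => ((1 - θ) * l1norm (gradient L (x k ω)) / Linf) * l1norm (g k ω)) μ :=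
    hf1_int.bdd_mul hη_aesm hη_norm_bd
  have hηf2_int : Integrable (fun ω => ((1 - θ) * l1norm (gradient L (x k ω)) / Linf)
      * l1norm (g k ω - gradient L (x k ω))) μ :=
    hf2_int.bdd_mul hη_aesm hη_norm_bd
  have hηn_int : Integrable (fun ω => ((1 - θ) * l1norm (gradient L (x k ω)) / Linf)
      * l1norm (gradient L (x k ω))) μ :=
    hn_int.bdd_mul hη_aesm hη_norm_bd
  -- pull-out lemmas
  have hηsm : StronglyMeasurable[genBy x k]
      (fun ω => (1 - θ) * l1norm (gradient L (x k ω)) / Linf) :=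
    hηm'.stronglyMeasurable
  have hpull1 : μ[fun ω => ((1 - θ) * l1norm (gradient L (x k ω)) / Linf)
        * l1norm (g k ω)|genBy x k]
      =ᵐ[μ] fun ω => ((1 - θ) * l1norm (gradient L (x k ω)) / Linf)
        * (μ[fun ω' => l1norm (g k ω')|genBy x k]) ω := by
    have h := condExp_stronglyMeasurable_mul_of_bound hm hηsm hf1_int ηm hη_norm_bd
    filter_upwards [h] with ω hω
    exact hω
  have hpull2 : μ[fun ω => ((1 - θ) * l1norm (gradient L (x k ω)) / Linf)
        * l1norm (g k ω - gradient L (x k ω))|genBy x k]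
      =ᵐ[μ] fun ω => ((1 - θ) * l1norm (gradient L (x k ω)) / Linf)
        * (μ[fun ω' => l1norm (g k ω' - gradient L (x k ω'))|genBy x k]) ω := by
    have h := condExp_stronglyMeasurable_mul_of_bound hm hηsm hf2_int ηm hη_norm_bd
    filter_upwards [h] with ω hω
    exact hω
  -- noise bound in expectation
  have hE2 : ∫ ω, ((1 - θ) * l1norm (gradient L (x k ω)) / Linf)
        * l1norm (g k ω - gradient L (x k ω)) ∂μ
      ≤ θ * ∫ ω, ((1 - θ) * l1norm (gradient L (x k ω)) / Linf)
        * l1norm (gradient L (x k ω)) ∂μ := by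
    have hcond_int : Integrable (fun ω => ((1 - θ) * l1norm (gradient L (x k ω)) / Linf)
        * (μ[fun ω' => l1norm (g k ω' - gradient L (x k ω'))|genBy x k]) ω) μ :=
      integrable_condExp.bdd_mul hη_aesm hη_norm_bd
    calc ∫ ω, ((1 - θ) * l1norm (gradient L (x k ω)) / Linf)
          * l1norm (g k ω - gradient L (x k ω)) ∂μ
        = ∫ ω, (μ[fun ω' => ((1 - θ) * l1norm (gradient L (x k ω')) / Linf)
            * l1norm (g k ω' - gradient L (x k ω'))|genBy x k]) ω ∂μ :=
          (integral_condExp hm).symm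
      _ = ∫ ω, ((1 - θ) * l1norm (gradient L (x k ω)) / Linf)
            * (μ[fun ω' => l1norm (g k ω' - gradient L (x k ω'))|genBy x k]) ω ∂μ :=
          integral_congr_ae hpull2
      _ ≤ ∫ ω, θ * (((1 - θ) * l1norm (gradient L (x k ω)) / Linf)
            * l1norm (gradient L (x k ω))) ∂μ := by
          refine integral_mono_ae hcond_int (hηn_int.const_mul θ) ?_
          filter_upwards [hnoise k] with ω hω
          calc ((1 - θ) * l1norm (gradient L (x k ω)) / Linf)
                * (μ[fun ω' => l1norm (g k ω' - gradient L (x k ω'))|genBy x k]) ω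
              ≤ ((1 - θ) * l1norm (gradient L (x k ω)) / Linf)
                * (θ * l1norm (gradient L (x k ω))) :=
                mul_le_mul_of_nonneg_left hω (hη0 ω)
            _ = θ * (((1 - θ) * l1norm (gradient L (x k ω)) / Linf)
                * l1norm (gradient L (x k ω))) := by ring
      _ = θ * ∫ ω, ((1 - θ) * l1norm (gradient L (x k ω)) / Linf)
            * l1norm (gradient L (x k ω)) ∂μ := integral_const_mul θ _
  -- coordinatewise unbiasedness
  have hcoord : ∀ i : Fin d, (fun ω => gradient L (x k ω) i)
      =ᵐ[μ] μ[fun ω => g k ω i|genBy x k] := by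
    intro i
    refine ae_eq_condExp_of_forall_setIntegral_eq hm (hproj_int i)
      (fun s _ _ => (hGi_int i).integrableOn) (fun s hs _ => ?_)
      ((hGi_meas' i).stronglyMeasurable.aestronglyMeasurable)
    -- vector-valued set-integral identity
    have h1 : ∫ ω in s, g k ω ∂μ = ∫ ω in s, gradient L (x k ω) ∂μ := by
      rw [← setIntegral_condExp hm (hg_int k) hs]
      exact setIntegral_congr_ae (hm s hs)
        ((hunbiased k).mono fun ω hω _ => hω.symm) |>.symm
    have h2 := (EuclideanSpace.proj (𝕜 := ℝ) i).integral_comp_comm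
      ((hg_int k).integrableOn (s := s))
    have h3 := (EuclideanSpace.proj (𝕜 := ℝ) i).integral_comp_comm
      ((hGvec_int).integrableOn (s := s))
    calc ∫ ω in s, gradient L (x k ω) i ∂μ
        = EuclideanSpace.proj (𝕜 := ℝ) i (∫ ω in s, gradient L (x k ω) ∂μ) := h3
      _ = EuclideanSpace.proj (𝕜 := ℝ) i (∫ ω in s, g k ω ∂μ) := by rw [h1]
      _ = ∫ ω in s, g k ω i ∂μ := h2.symm
  -- conditional Jensen: n ≤ μ[l1norm (g k ·)|m]
  have habs : ∀ i : Fin d, (fun ω => |gradient L (x k ω) i|)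
      ≤ᵐ[μ] μ[(fun ω => |g k ω i|) | genBy x k] := by
    intro i
    have h1 := condExp_mono (μ := μ) (m := genBy x k) (hproj_int i) (hproj_int i).abs
      (ae_of_all _ fun ω => le_abs_self (g k ω i))
    have h2 := condExp_mono (μ := μ) (m := genBy x k) (hproj_int i).neg (hproj_int i).abs
      (ae_of_all _ fun ω => by
        show -(fun ω' => g k ω' i) ω ≤ |g k ω i|
        simpa using neg_le_abs (g k ω i))
    have h3 := condExp_neg (μ := μ) (m := genBy x k) (fun ω => g k ω i)
    filter_upwards [hcoord i, h1, h2, h3] with ω hc h1' h2' h3'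
    rw [hc]
    have h4 : -(μ[fun ω => g k ω i|genBy x k]) ω ≤ (μ[(fun ω => |g k ω i|) | genBy x k]) ω := by
      rw [h3'] at h2'
      simpa using h2'
    exact abs_le.2 ⟨by linarith [h4], h1'⟩
  have hjensen : (fun ω => l1norm (gradient L (x k ω)))
      ≤ᵐ[μ] μ[fun ω' => l1norm (g k ω')|genBy x k] := by
    have hsum : μ[fun ω' => l1norm (g k ω')|genBy x k]
        =ᵐ[μ] ∑ i : Fin d, μ[(fun ω => |g k ω i|) | genBy x k] := by
      have h0 : (fun ω' => l1norm (g k ω')) = ∑ i : Fin d, (fun ω => |g k ω i|) := by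
        funext ω; rw [Finset.sum_apply]; rfl
      rw [h0]
      exact condExp_finset_sum (fun i _ => (hproj_int i).abs) (genBy x k)
    have hall : ∀ᵐ ω ∂μ, ∀ i : Fin d,
        |gradient L (x k ω) i| ≤ (μ[(fun ω' => |g k ω' i|) | genBy x k]) ω :=
      (ae_all_iff).2 fun i => habs i
    filter_upwards [hall, hsum] with ω h1 h2
    calc l1norm (gradient L (x k ω)) = ∑ i, |gradient L (x k ω) i| := rfl
      _ ≤ ∑ i, (μ[(fun ω' => |g k ω' i|) | genBy x k]) ω := Finset.sum_le_sum fun i _ => h1 i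
      _ = (∑ i : Fin d, μ[(fun ω' => |g k ω' i|) | genBy x k]) ω := by
          rw [Finset.sum_apply]
      _ = (μ[fun ω' => l1norm (g k ω')|genBy x k]) ω := h2.symm
  -- unbiasedness bound in expectation
  have hE1 : ∫ ω, ((1 - θ) * l1norm (gradient L (x k ω)) / Linf)
        * l1norm (gradient L (x k ω)) ∂μ
      ≤ ∫ ω, ((1 - θ) * l1norm (gradient L (x k ω)) / Linf) * l1norm (g k ω) ∂μ := by
    have hcond_int : Integrable (fun ω => ((1 - θ) * l1norm (gradient L (x k ω)) / Linf)
        * (μ[fun ω' => l1norm (g k ω')|genBy x k]) ω) μ :=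
      integrable_condExp.bdd_mul hη_aesm hη_norm_bd
    calc ∫ ω, ((1 - θ) * l1norm (gradient L (x k ω)) / Linf)
          * l1norm (gradient L (x k ω)) ∂μ
        ≤ ∫ ω, ((1 - θ) * l1norm (gradient L (x k ω)) / Linf)
            * (μ[fun ω' => l1norm (g k ω')|genBy x k]) ω ∂μ := by
          refine integral_mono_ae hηn_int hcond_int ?_
          filter_upwards [hjensen] with ω hω
          exact mul_le_mul_of_nonneg_left hω (hη0 ω)
      _ = ∫ ω, (μ[fun ω' => ((1 - θ) * l1norm (gradient L (x k ω')) / Linf)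
            * l1norm (g k ω')|genBy x k]) ω ∂μ := (integral_congr_ae hpull1).symm
      _ = ∫ ω, ((1 - θ) * l1norm (gradient L (x k ω)) / Linf) * l1norm (g k ω) ∂μ :=
          integral_condExp hm
  -- pointwise descent step
  have hstep : ∀ ω, L (x (k + 1) ω)
      ≤ L (x k ω) - ((1 - θ) * l1norm (gradient L (x k ω)) / Linf) * l1norm (g k ω)
        + ((1 - θ) * l1norm (gradient L (x k ω)) / Linf)
          * l1norm (g k ω - gradient L (x k ω))
        + (1 - θ) ^ 2 * (l1norm (gradient L (x k ω))) ^ 2 / (2 * Linf) := by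
    intro ω
    rw [hupdate k ω]
    exact step_ineq L hL Linf hLinf_pos hsmooth θ hθ1 (x k ω) (g k ω)
  have hlast_int : Integrable
      (fun ω => (1 - θ) ^ 2 * (l1norm (gradient L (x k ω))) ^ 2 / (2 * Linf)) μ :=
    (hnsq_int.const_mul ((1 - θ) ^ 2)).div_const (2 * Linf)
  have hrhs_int : Integrable (fun ω =>
      L (x k ω) - ((1 - θ) * l1norm (gradient L (x k ω)) / Linf) * l1norm (g k ω)
        + ((1 - θ) * l1norm (gradient L (x k ω)) / Linf)
          * l1norm (g k ω - gradient L (x k ω))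
        + (1 - θ) ^ 2 * (l1norm (gradient L (x k ω))) ^ 2 / (2 * Linf)) μ :=
    ((hLk_int.sub hηf1_int).add hηf2_int).add hlast_int
  have hI : ∫ ω, L (x (k + 1) ω) ∂μ
      ≤ (∫ ω, L (x k ω) ∂μ)
        - (∫ ω, ((1 - θ) * l1norm (gradient L (x k ω)) / Linf) * l1norm (g k ω) ∂μ)
        + (∫ ω, ((1 - θ) * l1norm (gradient L (x k ω)) / Linf)
            * l1norm (g k ω - gradient L (x k ω)) ∂μ)
        + (1 - θ) ^ 2 * (∫ ω, (l1norm (gradient L (x k ω))) ^ 2 ∂μ) / (2 * Linf) := by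
    have h1 := integral_mono hLk1_int hrhs_int hstep
    have e1 : ∫ ω, (L (x k ω) - ((1 - θ) * l1norm (gradient L (x k ω)) / Linf) * l1norm (g k ω)
          + ((1 - θ) * l1norm (gradient L (x k ω)) / Linf)
            * l1norm (g k ω - gradient L (x k ω))
          + (1 - θ) ^ 2 * (l1norm (gradient L (x k ω))) ^ 2 / (2 * Linf)) ∂μ
        = (∫ ω, (L (x k ω) - ((1 - θ) * l1norm (gradient L (x k ω)) / Linf) * l1norm (g k ω)
            + ((1 - θ) * l1norm (gradient L (x k ω)) / Linf)
              * l1norm (g k ω - gradient L (x k ω))) ∂μ)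
          + ∫ ω, (1 - θ) ^ 2 * (l1norm (gradient L (x k ω))) ^ 2 / (2 * Linf) ∂μ :=
      integral_add ((hLk_int.sub hηf1_int).add hηf2_int) hlast_int
    have e2 : ∫ ω, (L (x k ω) - ((1 - θ) * l1norm (gradient L (x k ω)) / Linf) * l1norm (g k ω)
          + ((1 - θ) * l1norm (gradient L (x k ω)) / Linf)
            * l1norm (g k ω - gradient L (x k ω))) ∂μ
        = (∫ ω, (L (x k ω)
            - ((1 - θ) * l1norm (gradient L (x k ω)) / Linf) * l1norm (g k ω)) ∂μ)
          + ∫ ω, ((1 - θ) * l1norm (gradient L (x k ω)) / Linf)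
            * l1norm (g k ω - gradient L (x k ω)) ∂μ :=
      integral_add (hLk_int.sub hηf1_int) hηf2_int
    have e3 : ∫ ω, (L (x k ω)
          - ((1 - θ) * l1norm (gradient L (x k ω)) / Linf) * l1norm (g k ω)) ∂μ
        = (∫ ω, L (x k ω) ∂μ)
          - ∫ ω, ((1 - θ) * l1norm (gradient L (x k ω)) / Linf) * l1norm (g k ω) ∂μ :=
      integral_sub hLk_int hηf1_int
    have e4 : ∫ ω, (1 - θ) ^ 2 * (l1norm (gradient L (x k ω))) ^ 2 / (2 * Linf) ∂μ
        = (∫ ω, (1 - θ) ^ 2 * (l1norm (gradient L (x k ω))) ^ 2 ∂μ) / (2 * Linf) :=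
      integral_div _ _
    have e5 : ∫ ω, (1 - θ) ^ 2 * (l1norm (gradient L (x k ω))) ^ 2 ∂μ
        = (1 - θ) ^ 2 * ∫ ω, (l1norm (gradient L (x k ω))) ^ 2 ∂μ :=
      integral_const_mul _ _
    rw [e1, e2, e3, e4, e5] at h1
    linarith [h1]
  -- relating ∫ η n to ∫ n²
  have hηn_eq : ∫ ω, ((1 - θ) * l1norm (gradient L (x k ω)) / Linf)
        * l1norm (gradient L (x k ω)) ∂μ
      = (1 - θ) * (∫ ω, (l1norm (gradient L (x k ω))) ^ 2 ∂μ) / Linf := by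
    have h0 : (fun ω => ((1 - θ) * l1norm (gradient L (x k ω)) / Linf)
          * l1norm (gradient L (x k ω)))
        = fun ω => ((1 - θ) * (l1norm (gradient L (x k ω))) ^ 2) / Linf := by
      funext ω; ring
    rw [h0]
    have e6 : ∫ ω, ((1 - θ) * (l1norm (gradient L (x k ω))) ^ 2) / Linf ∂μ
        = (∫ ω, (1 - θ) * (l1norm (gradient L (x k ω))) ^ 2 ∂μ) / Linf := integral_div _ _
    have e7 : ∫ ω, (1 - θ) * (l1norm (gradient L (x k ω))) ^ 2 ∂μ
        = (1 - θ) * ∫ ω, (l1norm (gradient L (x k ω))) ^ 2 ∂μ := integral_const_mul _ _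
    rw [e6, e7]
  -- strong convexity in expectation
  have hsc_int : 2 * μstrong * ((∫ ω, L (x k ω) ∂μ) - Lstar)
      ≤ ∫ ω, (l1norm (gradient L (x k ω))) ^ 2 ∂μ := by
    have h1 : ∫ ω, 2 * μstrong * (L (x k ω) - Lstar) ∂μ
        ≤ ∫ ω, (l1norm (gradient L (x k ω))) ^ 2 ∂μ :=
      integral_mono ((hLk_int.sub (integrable_const Lstar)).const_mul (2 * μstrong))
        hnsq_int (fun ω => hsc (x k ω))
    rwa [integral_const_mul, integral_sub hLk_int (integrable_const Lstar),
      integral_const, probReal_univ, one_smul] at h1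
  -- final algebra
  set A : ℝ := ∫ ω, L (x k ω) ∂μ with hA_def
  set B : ℝ := ∫ ω, L (x (k + 1) ω) ∂μ with hB_def
  set N : ℝ := ∫ ω, (l1norm (gradient L (x k ω))) ^ 2 ∂μ with hN_def
  set EN : ℝ := ∫ ω, ((1 - θ) * l1norm (gradient L (x k ω)) / Linf)
    * l1norm (gradient L (x k ω)) ∂μ with hEN_def
  set F1 : ℝ := ∫ ω, ((1 - θ) * l1norm (gradient L (x k ω)) / Linf) * l1norm (g k ω) ∂μ
    with hF1_def
  set F2 : ℝ := ∫ ω, ((1 - θ) * l1norm (gradient L (x k ω)) / Linf)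
    * l1norm (g k ω - gradient L (x k ω)) ∂μ with hF2_def
  clear_value A B N EN F1 F2
  have step1 : B ≤ A - (1 - θ) * EN + (1 - θ) ^ 2 * N / (2 * Linf) := by
    have hx1 : (1 - θ) * EN = EN - θ * EN := by ring
    linarith [hI, hE1, hE2, hx1]
  have step2 : (1 - θ) * EN = (1 - θ) ^ 2 * N / Linf := by rw [hηn_eq]; ring
  have step3 : B ≤ A - (1 - θ) ^ 2 * N / (2 * Linf) := by
    have h9 : (1 - θ) ^ 2 * N / Linf - (1 - θ) ^ 2 * N / (2 * Linf)
        = (1 - θ) ^ 2 * N / (2 * Linf) := by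
      field_simp
      ring
    linarith [step1, step2, h9]
  have step4 : (1 - θ) ^ 2 * (2 * μstrong * (A - Lstar)) / (2 * Linf)
      ≤ (1 - θ) ^ 2 * N / (2 * Linf) := by
    refine (div_le_div_iff_of_pos_right (by linarith : (0:ℝ) < 2 * Linf)).2 ?_
    exact mul_le_mul_of_nonneg_left hsc_int (sq_nonneg _)
  have step5 : (1 - θ) ^ 2 * (2 * μstrong * (A - Lstar)) / (2 * Linf)
      = (1 - θ) ^ 2 * μstrong / Linf * (A - Lstar) := by
    field_simp
  have hgoal : (1 - (1 - θ) ^ 2 * μstrong / Linf) * (A - Lstar)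
      = (A - Lstar) - (1 - θ) ^ 2 * μstrong / Linf * (A - Lstar) := by ring
  linarith [step3, step4, step5, hgoal]
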